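/- Let (C, E, s) be an extriangulated category satisfying Condition (WIC), and let (Q, R̃) and (Q̃, R) be two hereditary cotorsion pairs with R̃ ⊆ R, Q̃ ⊆ Q, and Q̃ ∩ R = Q ∩ R̃. Define W₁ = {X : there exists an E-triangle X → R → Q --> with R ∈ R̃, Q ∈ Q̃} and W₂ = {X : there exists an E-triangle R' → Q' → X --> with R' ∈ R̃, Q' ∈ Q̃}. Then W₁ = W₂. -/

import Mathlib

open CategoryTheory Limits

universe w v u

/-- An extriangulated category structure on an additive category `𝒞`, in the sense of
Nakaoka–Palu: a biadditive `Ab`-valued functor `E` together with an additive realization,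
encoded via the predicate `IsTriangle x y δ` meaning that `A ⟶x B ⟶y X` realizes
`δ ∈ E(X,A)`, satisfying (ET1)–(ET4) and their duals. -/
structure ExtriangulatedStructure (𝒞 : Type u) [Category.{v} 𝒞] [Preadditive 𝒞]
    [HasBinaryBiproducts 𝒞] where
  E : 𝒞 → 𝒞 → AddCommGrpCat.{w}
  pull : ∀ {X' X A : 𝒞}, (X' ⟶ X) → E X A → E X' A
  push : ∀ {X A A' : 𝒞}, (A ⟶ A') → E X A → E X A'
  pull_id : ∀ {X A : 𝒞} (δ : E X A), pull (𝟙 X) δ = δ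
  push_id : ∀ {X A : 𝒞} (δ : E X A), push (𝟙 A) δ = δ
  pull_comp : ∀ {X'' X' X A : 𝒞} (c' : X'' ⟶ X') (c : X' ⟶ X) (δ : E X A),
      pull (c' ≫ c) δ = pull c' (pull c δ)
  push_comp : ∀ {X A A' A'' : 𝒞} (a : A ⟶ A') (a' : A' ⟶ A'') (δ : E X A),
      push (a ≫ a') δ = push a' (push a δ)
  pull_push : ∀ {X' X A A' : 𝒞} (c : X' ⟶ X) (a : A ⟶ A') (δ : E X A),
      pull c (push a δ) = push a (pull c δ)
  pull_add : ∀ {X' X A : 𝒞} (c : X' ⟶ X) (δ δ' : E X A),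
      pull c (δ + δ') = pull c δ + pull c δ'
  push_add : ∀ {X A A' : 𝒞} (a : A ⟶ A') (δ δ' : E X A),
      push a (δ + δ') = push a δ + push a δ'
  add_pull : ∀ {X' X A : 𝒞} (c c' : X' ⟶ X) (δ : E X A),
      pull (c + c') δ = pull c δ + pull c' δ
  add_push : ∀ {X A A' : 𝒞} (a a' : A ⟶ A') (δ : E X A),
      push (a + a') δ = push a δ + push a' δ
  IsTriangle : ∀ {A B X : 𝒞}, (A ⟶ B) → (B ⟶ X) → E X A → Prop
  realize_exists : ∀ {X A : 𝒞} (δ : E X A),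
      ∃ (B : 𝒞) (x : A ⟶ B) (y : B ⟶ X), IsTriangle x y δ
  realize_zero : ∀ (A X : 𝒞),
      IsTriangle (biprod.inl : A ⟶ A ⊞ X) (biprod.snd : A ⊞ X ⟶ X) (0 : E X A)
  realize_sum : ∀ {A B X A' B' X' : 𝒞} (x : A ⟶ B) (y : B ⟶ X) (δ : E X A)
      (x' : A' ⟶ B') (y' : B' ⟶ X') (δ' : E X' A'),
      IsTriangle x y δ → IsTriangle x' y' δ' →
      IsTriangle (biprod.map x x') (biprod.map y y')
        (push biprod.inl (pull biprod.fst δ) + push biprod.inr (pull biprod.snd δ'))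
  realize_iso : ∀ {A B B' X : 𝒞} (x : A ⟶ B) (y : B ⟶ X) (δ : E X A) (b : B ≅ B'),
      IsTriangle x y δ → IsTriangle (x ≫ b.hom) (b.inv ≫ y) δ
  realize_mor : ∀ {A B X A' B' X' : 𝒞} {x : A ⟶ B} {y : B ⟶ X} {δ : E X A}
      {x' : A' ⟶ B'} {y' : B' ⟶ X'} {δ' : E X' A'} (a : A ⟶ A') (c : X ⟶ X'),
      IsTriangle x y δ → IsTriangle x' y' δ' → push a δ = pull c δ' →
      ∃ b : B ⟶ B', x ≫ b = a ≫ x' ∧ y ≫ c = b ≫ y'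
  ET3 : ∀ {A B X A' B' X' : 𝒞} {x : A ⟶ B} {y : B ⟶ X} {δ : E X A}
      {x' : A' ⟶ B'} {y' : B' ⟶ X'} {δ' : E X' A'} (a : A ⟶ A') (b : B ⟶ B'),
      IsTriangle x y δ → IsTriangle x' y' δ' → x ≫ b = a ≫ x' →
      ∃ c : X ⟶ X', push a δ = pull c δ' ∧ y ≫ c = b ≫ y'
  ET3op : ∀ {A B X A' B' X' : 𝒞} {x : A ⟶ B} {y : B ⟶ X} {δ : E X A}
      {x' : A' ⟶ B'} {y' : B' ⟶ X'} {δ' : E X' A'} (b : B ⟶ B') (c : X ⟶ X'),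
      IsTriangle x y δ → IsTriangle x' y' δ' → y ≫ c = b ≫ y' →
      ∃ a : A ⟶ A', push a δ = pull c δ' ∧ x ≫ b = a ≫ x'
  ET4 : ∀ {A B D Cv F : 𝒞} (f : A ⟶ B) (f' : B ⟶ D) (δ : E D A)
      (g : B ⟶ Cv) (g' : Cv ⟶ F) (δ' : E F B),
      IsTriangle f f' δ → IsTriangle g g' δ' →
      ∃ (E₀ : 𝒞) (h : A ⟶ Cv) (h' : Cv ⟶ E₀) (d : D ⟶ E₀) (e : E₀ ⟶ F) (δ'' : E E₀ A),
        IsTriangle h h' δ'' ∧ IsTriangle d e (push f' δ') ∧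
        h = f ≫ g ∧ f' ≫ d = g ≫ h' ∧ g' = h' ≫ e ∧
        pull d δ'' = δ ∧ push f δ'' = pull e δ'
  ET4op : ∀ {D B A F Cv : 𝒞} (i : D ⟶ B) (p : B ⟶ A) (δ : E A D)
      (j : F ⟶ Cv) (q : Cv ⟶ B) (δ' : E B F),
      IsTriangle i p δ → IsTriangle j q δ' →
      ∃ (E₀ : 𝒞) (i' : E₀ ⟶ Cv) (p' : Cv ⟶ A) (m : F ⟶ E₀) (n : E₀ ⟶ D) (δ'' : E A E₀),
        IsTriangle i' p' δ'' ∧ IsTriangle m n (pull i δ') ∧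
        p' = q ≫ p ∧ i' ≫ q = n ≫ i ∧ j = m ≫ i' ∧
        push n δ'' = δ ∧ pull p δ'' = push m δ'

namespace ExtriangulatedStructure

variable {𝒞 : Type u} [Category.{v} 𝒞] [Preadditive 𝒞] [HasBinaryBiproducts 𝒞]
variable (S : ExtriangulatedStructure.{w} 𝒞)

/-- A morphism is an inflation if it occurs as the first map of some `E`-triangle. -/
def IsInflation {A B : 𝒞} (f : A ⟶ B) : Prop :=
  ∃ (X : 𝒞) (g : B ⟶ X) (δ : S.E X A), S.IsTriangle f g δ

/-- A morphism is a deflation if it occurs as the second map of some `E`-triangle. -/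
def IsDeflation {B X : 𝒞} (g : B ⟶ X) : Prop :=
  ∃ (A : 𝒞) (f : A ⟶ B) (δ : S.E X A), S.IsTriangle f g δ

/-- Condition (WIC). -/
def WIC : Prop :=
  (∀ {A B X : 𝒞} (f : A ⟶ B) (g : B ⟶ X), S.IsInflation (f ≫ g) → S.IsInflation f) ∧
  (∀ {A B X : 𝒞} (f : A ⟶ B) (g : B ⟶ X), S.IsDeflation (f ≫ g) → S.IsDeflation g)

/-- `(a, b, c)` is a morphism of `E`-triangles. -/
def IsTriangleMor {A B X A' B' X' : 𝒞} (x : A ⟶ B) (y : B ⟶ X) (δ : S.E X A)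
    (x' : A' ⟶ B') (y' : B' ⟶ X') (δ' : S.E X' A')
    (a : A ⟶ A') (b : B ⟶ B') (c : X ⟶ X') : Prop :=
  x ≫ b = a ≫ x' ∧ y ≫ c = b ≫ y' ∧ S.push a δ = S.pull c δ'

/-- A cotorsion pair `(𝒬, ℛ)`: `E(𝒬, ℛ) = 0` and every object admits the two
approximation `E`-triangles. -/
def CotorsionPair (𝒬 ℛ : Set 𝒞) : Prop :=
  (∀ (Q R : 𝒞), Q ∈ 𝒬 → R ∈ ℛ → ∀ δ : S.E Q R, δ = 0) ∧
  (∀ X : 𝒞, ∃ (R Q : 𝒞) (f : R ⟶ Q) (g : Q ⟶ X) (δ : S.E X R),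
      S.IsTriangle f g δ ∧ Q ∈ 𝒬 ∧ R ∈ ℛ) ∧
  (∀ X : 𝒞, ∃ (R Q : 𝒞) (f : X ⟶ R) (g : R ⟶ Q) (δ : S.E Q X),
      S.IsTriangle f g δ ∧ Q ∈ 𝒬 ∧ R ∈ ℛ)

/-- A cotorsion pair is hereditary if `𝒬` is closed under cocones of deflations and
`ℛ` is closed under cones of inflations. -/
def Hereditary (𝒬 ℛ : Set 𝒞) : Prop :=
  (∀ {A B X : 𝒞} (f : A ⟶ B) (g : B ⟶ X) (δ : S.E X A),
      S.IsTriangle f g δ → B ∈ 𝒬 → X ∈ 𝒬 → A ∈ 𝒬) ∧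
  (∀ {A B X : 𝒞} (f : A ⟶ B) (g : B ⟶ X) (δ : S.E X A),
      S.IsTriangle f g δ → A ∈ ℛ → B ∈ ℛ → X ∈ ℛ)

/-- A class of objects is thick: closed under direct summands and satisfying the
2-out-of-3 property on `E`-triangles. -/
def Thick (𝒲 : Set 𝒞) : Prop :=
  (∀ {X Y : 𝒞}, Y ∈ 𝒲 → (∃ (i : X ⟶ Y) (p : Y ⟶ X), i ≫ p = 𝟙 X) → X ∈ 𝒲) ∧
  (∀ {A B X : 𝒞} (f : A ⟶ B) (g : B ⟶ X) (δ : S.E X A), S.IsTriangle f g δ →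
    (A ∈ 𝒲 → B ∈ 𝒲 → X ∈ 𝒲) ∧ (A ∈ 𝒲 → X ∈ 𝒲 → B ∈ 𝒲) ∧ (B ∈ 𝒲 → X ∈ 𝒲 → A ∈ 𝒲))

/-- `(𝒬, 𝒲, ℛ)` is a Hovey triple. -/
def HoveyTriple (𝒬 𝒲 ℛ : Set 𝒞) : Prop :=
  S.Thick 𝒲 ∧ S.CotorsionPair 𝒬 (𝒲 ∩ ℛ) ∧ S.CotorsionPair (𝒬 ∩ 𝒲) ℛ

end ExtriangulatedStructure

namespace ExtriangulatedStructure

variable {𝒞 : Type u} [Category.{v} 𝒞] [Preadditive 𝒞] [HasBinaryBiproducts 𝒞]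
variable (S : ExtriangulatedStructure.{w} 𝒞)

lemma pull_zero' {X' X A : 𝒞} (c : X' ⟶ X) : S.pull c (0 : S.E X A) = 0 := by
  have h := S.pull_add c (0 : S.E X A) 0
  rw [add_zero] at h
  have h2 : S.pull c (0 : S.E X A) + 0 = S.pull c (0 : S.E X A) + S.pull c 0 := by
    rw [add_zero]; exact h
  exact (add_left_cancel h2).symm

lemma push_zero' {X A A' : 𝒞} (a : A ⟶ A') : S.push a (0 : S.E X A) = 0 := by
  have h := S.push_add a (0 : S.E X A) 0
  rw [add_zero] at h
  have h2 : S.push a (0 : S.E X A) + 0 = S.push a (0 : S.E X A) + S.push a 0 := by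
    rw [add_zero]; exact h
  exact (add_left_cancel h2).symm

lemma push_x_eq_zero {A B C : 𝒞} {x : A ⟶ B} {y : B ⟶ C} {δ : S.E C A}
    (ht : S.IsTriangle x y δ) : S.push x δ = 0 := by
  obtain ⟨c, hc, -⟩ := S.ET3 x biprod.inl ht (S.realize_zero B C) rfl
  rw [hc, S.pull_zero']

lemma tri_comp_zero {A B C : 𝒞} {x : A ⟶ B} {y : B ⟶ C} {δ : S.E C A}
    (ht : S.IsTriangle x y δ) : x ≫ y = 0 := by
  obtain ⟨b, hb1, hb2⟩ := S.realize_mor x (𝟙 C) ht (S.realize_zero B C)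
      (by rw [S.pull_id]; exact S.push_x_eq_zero ht)
  rw [Category.comp_id] at hb2
  rw [hb2, ← Category.assoc, hb1, Category.assoc, biprod.inl_snd, comp_zero]

lemma weak_coker {A B C Z : 𝒞} {x : A ⟶ B} {y : B ⟶ C} {δ : S.E C A}
    (ht : S.IsTriangle x y δ) (f : B ⟶ Z) (hf : x ≫ f = 0) :
    ∃ g : C ⟶ Z, y ≫ g = f := by
  obtain ⟨c, -, hc⟩ := S.ET3 x (biprod.lift (𝟙 B) f) ht (S.realize_zero B Z)
      (by apply biprod.hom_ext <;> simp [hf])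
  exact ⟨c, by simpa using hc⟩

lemma weak_ker {A B C Z : 𝒞} {x : A ⟶ B} {y : B ⟶ C} {δ : S.E C A}
    (ht : S.IsTriangle x y δ) (h : Z ⟶ B) (hh : h ≫ y = 0) :
    ∃ e : Z ⟶ A, e ≫ x = h := by
  obtain ⟨a, -, ha⟩ := S.ET3op (biprod.desc h (𝟙 B)) y (S.realize_zero Z B) ht
      (by apply biprod.hom_ext' <;> simp [hh])
  exact ⟨a, by simpa using ha.symm⟩

lemma endo_iso {A B C : 𝒞} {x : A ⟶ B} {y : B ⟶ C} {δ : S.E C A}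
    (ht : S.IsTriangle x y δ) (e : B ⟶ B) (h1 : x ≫ e = x) (h2 : e ≫ y = y) :
    IsIso e := by
  obtain ⟨g, hg⟩ := S.weak_coker ht (e - 𝟙 B)
      (by rw [Preadditive.comp_sub, h1, Category.comp_id, sub_self])
  obtain ⟨w, hw⟩ := S.weak_ker ht (e - 𝟙 B)
      (by rw [Preadditive.sub_comp, h2, Category.id_comp, sub_self])
  have hxy := S.tri_comp_zero ht
  have hn : (e - 𝟙 B) ≫ (e - 𝟙 B) = 0 := by
    calc (e - 𝟙 B) ≫ (e - 𝟙 B) = (w ≫ x) ≫ (y ≫ g) := by rw [hw, hg]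
      _ = w ≫ (x ≫ y) ≫ g := by simp only [Category.assoc]
      _ = 0 := by rw [hxy]; simp
  have key1 : e ≫ (e - 𝟙 B) = e - 𝟙 B := by
    calc e ≫ (e - 𝟙 B) = ((e - 𝟙 B) + 𝟙 B) ≫ (e - 𝟙 B) := by
          congr 1; abel
      _ = e - 𝟙 B := by rw [Preadditive.add_comp, hn, Category.id_comp, zero_add]
  have key2 : (e - 𝟙 B) ≫ e = e - 𝟙 B := by
    calc (e - 𝟙 B) ≫ e = (e - 𝟙 B) ≫ ((e - 𝟙 B) + 𝟙 B) := by
          congr 1; abel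
      _ = e - 𝟙 B := by rw [Preadditive.comp_add, hn, Category.comp_id, zero_add]
  refine ⟨⟨𝟙 B - (e - 𝟙 B), ?_, ?_⟩⟩
  · rw [Preadditive.comp_sub, Category.comp_id, key1, sub_sub_cancel]
  · rw [Preadditive.sub_comp, Category.id_comp, key2, sub_sub_cancel]

lemma split_iso {A B C : 𝒞} {x : A ⟶ B} {y : B ⟶ C}
    (ht : S.IsTriangle x y (0 : S.E C A)) : ∃ b : B ⟶ A ⊞ C, IsIso b := by
  obtain ⟨b, hb1, hb2⟩ := S.realize_mor (𝟙 A) (𝟙 C) ht (S.realize_zero A C)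
      (by rw [S.push_id, S.pull_id])
  obtain ⟨b', hb1', hb2'⟩ := S.realize_mor (𝟙 A) (𝟙 C) (S.realize_zero A C) ht
      (by rw [S.push_id, S.pull_id])
  rw [Category.id_comp] at hb1 hb1'
  rw [Category.comp_id] at hb2 hb2'
  have he : IsIso (b ≫ b') := S.endo_iso ht (b ≫ b')
      (by rw [← Category.assoc, hb1, hb1'])
      (by rw [Category.assoc, ← hb2', ← hb2])
  have he' : IsIso (b' ≫ b) := S.endo_iso (S.realize_zero A C) (b' ≫ b)
      (by rw [← Category.assoc, hb1', hb1])
      (by rw [Category.assoc, ← hb2, ← hb2'])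
  refine ⟨b, ⟨b' ≫ CategoryTheory.inv (b ≫ b'), ?_, ?_⟩⟩
  · rw [← Category.assoc, IsIso.hom_inv_id]
  · have hmid : (b' ≫ b) ≫ (b' ≫ CategoryTheory.inv (b ≫ b')) = b' := by
      calc (b' ≫ b) ≫ (b' ≫ CategoryTheory.inv (b ≫ b'))
          = b' ≫ ((b ≫ b') ≫ CategoryTheory.inv (b ≫ b')) := by
            simp only [Category.assoc]
        _ = b' := by rw [IsIso.hom_inv_id, Category.comp_id]
    have hkey : b' ≫ CategoryTheory.inv (b ≫ b') = CategoryTheory.inv (b' ≫ b) ≫ b' := by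
      calc b' ≫ CategoryTheory.inv (b ≫ b')
          = 𝟙 _ ≫ (b' ≫ CategoryTheory.inv (b ≫ b')) := by rw [Category.id_comp]
        _ = (CategoryTheory.inv (b' ≫ b) ≫ (b' ≫ b)) ≫ (b' ≫ CategoryTheory.inv (b ≫ b')) := by
            rw [IsIso.inv_hom_id]
        _ = CategoryTheory.inv (b' ≫ b) ≫ ((b' ≫ b) ≫ (b' ≫ CategoryTheory.inv (b ≫ b'))) := by
            rw [Category.assoc]
        _ = CategoryTheory.inv (b' ≫ b) ≫ b' := by rw [hmid]
    rw [hkey, Category.assoc, IsIso.inv_hom_id]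

lemma compl_triangle {A B C : 𝒞} {x : A ⟶ B} {y : B ⟶ C}
    (ht : S.IsTriangle x y (0 : S.E C A)) :
    ∃ (x' : C ⟶ B) (y' : B ⟶ A), S.IsTriangle x' y' (0 : S.E A C) := by
  obtain ⟨b, hb⟩ := S.split_iso ht
  haveI := hb
  exact ⟨_, _, S.realize_iso biprod.inl biprod.snd 0
    ((biprod.braiding C A).trans (asIso b).symm) (S.realize_zero C A)⟩

lemma split_retraction {A B C : 𝒞} {x : A ⟶ B} {y : B ⟶ C}
    (ht : S.IsTriangle x y (0 : S.E C A)) : ∃ r : B ⟶ A, x ≫ r = 𝟙 A := by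
  obtain ⟨b, hb1, -⟩ := S.realize_mor (𝟙 A) (𝟙 C) ht (S.realize_zero A C)
      (by rw [S.push_id, S.pull_id])
  rw [Category.id_comp] at hb1
  exact ⟨b ≫ biprod.fst, by rw [← Category.assoc, hb1, biprod.inl_fst]⟩

lemma split_section {A B C : 𝒞} {x : A ⟶ B} {y : B ⟶ C}
    (ht : S.IsTriangle x y (0 : S.E C A)) : ∃ s : C ⟶ B, s ≫ y = 𝟙 C := by
  obtain ⟨b', -, hb2'⟩ := S.realize_mor (𝟙 A) (𝟙 C) (S.realize_zero A C) ht
      (by rw [S.push_id, S.pull_id])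
  rw [Category.comp_id] at hb2'
  exact ⟨biprod.inr ≫ b', by rw [Category.assoc, ← hb2', biprod.inr_snd]⟩

/-- Contravariant vanishing transfer along a triangle `V → Z → U`. -/
lemma ex_vanish_contra {V Z U W : 𝒞} {x : V ⟶ Z} {y : Z ⟶ U} {κ : S.E U V}
    (ht : S.IsTriangle x y κ)
    (hV : ∀ η : S.E V W, η = 0) (hU : ∀ η : S.E U W, η = 0)
    (ξ : S.E Z W) : ξ = 0 := by
  obtain ⟨M, u, v, htM⟩ := S.realize_exists ξ
  obtain ⟨E₀, i', p', m, n, δ'', ht1, ht2, -, -, -, -, h7⟩ := S.ET4op x y κ u v ξ ht htM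
  rw [hV (S.pull x ξ)] at ht2
  obtain ⟨r, hr⟩ := S.split_retraction ht2
  calc ξ = S.push (𝟙 W) ξ := (S.push_id ξ).symm
    _ = S.push (m ≫ r) ξ := by rw [hr]
    _ = S.push r (S.push m ξ) := S.push_comp m r ξ
    _ = S.push r (S.pull y δ'') := by rw [← h7]
    _ = S.pull y (S.push r δ'') := (S.pull_push y r δ'').symm
    _ = 0 := by rw [hU (S.push r δ''), S.pull_zero']

/-- Covariant vanishing transfer along a triangle `V → Z → U`. -/
lemma ex_vanish_cov {V Z U W : 𝒞} {x : V ⟶ Z} {y : Z ⟶ U} {κ : S.E U V}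
    (ht : S.IsTriangle x y κ)
    (hV : ∀ η : S.E W V, η = 0) (hU : ∀ η : S.E W U, η = 0)
    (ξ : S.E W Z) : ξ = 0 := by
  obtain ⟨M, zm, wm, htM⟩ := S.realize_exists ξ
  obtain ⟨E₀, hmap, h', d, e, δ'', ht1, ht2, -, -, -, -, h7⟩ := S.ET4 x y κ zm wm ξ ht htM
  rw [hU (S.push y ξ)] at ht2
  obtain ⟨s, hs⟩ := S.split_section ht2
  calc ξ = S.pull (𝟙 W) ξ := (S.pull_id ξ).symm
    _ = S.pull (s ≫ e) ξ := by rw [hs]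
    _ = S.pull s (S.pull e ξ) := S.pull_comp s e ξ
    _ = S.pull s (S.push x δ'') := by rw [← h7]
    _ = S.push x (S.pull s δ'') := S.pull_push s x δ''
    _ = 0 := by rw [hV (S.pull s δ''), S.push_zero']

/-- `Qt` is closed under extensions. -/
lemma qt_ext {Qt ℛ : Set 𝒞} (hcp2 : S.CotorsionPair Qt ℛ) (hh2 : S.Hereditary Qt ℛ)
    {Y T V : 𝒞} {a : Y ⟶ T} {b : T ⟶ V} {θ : S.E V Y}
    (ht : S.IsTriangle a b θ) (hY : Y ∈ Qt) (hV : V ∈ Qt) : T ∈ Qt := by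
  obtain ⟨R₀, Q₀, j₀, q₀, σ₀, htσ, hQ₀, hR₀⟩ := hcp2.2.1 T
  have hσ0 : σ₀ = 0 :=
    S.ex_vanish_contra ht (fun η => hcp2.1 Y R₀ hY hR₀ η) (fun η => hcp2.1 V R₀ hV hR₀ η) σ₀
  rw [hσ0] at htσ
  obtain ⟨K₁, i', p', m, n, δ'', ht1, ht2, -, -, -, -, -⟩ := S.ET4op a b θ j₀ q₀ 0 ht htσ
  have hK₁ : K₁ ∈ Qt := hh2.1 i' p' δ'' ht1 hQ₀ hV
  have hR₀Qt : R₀ ∈ Qt := hh2.1 m n _ ht2 hK₁ hY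
  obtain ⟨x', y', htc⟩ := S.compl_triangle htσ
  exact hh2.1 x' y' _ htc hQ₀ hR₀Qt

/-- `Rt` is closed under extensions. -/
lemma rt_ext {𝒬 Rt : Set 𝒞} (hcp1 : S.CotorsionPair 𝒬 Rt) (hh1 : S.Hereditary 𝒬 Rt)
    {R' T R : 𝒞} {a : R' ⟶ T} {b : T ⟶ R} {θ : S.E R R'}
    (ht : S.IsTriangle a b θ) (hR' : R' ∈ Rt) (hR : R ∈ Rt) : T ∈ Rt := by
  obtain ⟨R₀, Q₀, c₀, d₀, σ', htσ, hQ₀, hR₀⟩ := hcp1.2.2 T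
  have hσ0 : σ' = 0 :=
    S.ex_vanish_cov ht (fun η => hcp1.1 Q₀ R' hQ₀ hR' η) (fun η => hcp1.1 Q₀ R hQ₀ hR η) σ'
  rw [hσ0] at htσ
  obtain ⟨E₀, hmap, h', d, e, δ'', ht1, ht2, -, -, -, -, -⟩ := S.ET4 a b θ c₀ d₀ 0 ht htσ
  have hE₀ : E₀ ∈ Rt := hh1.2 hmap h' δ'' ht1 hR' hR₀
  have hQ₀Rt : Q₀ ∈ Rt := hh1.2 d e _ ht2 hR hE₀
  obtain ⟨x', y', htc⟩ := S.compl_triangle htσ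
  exact hh1.2 x' y' _ htc hQ₀Rt hR₀

end ExtriangulatedStructure


open CategoryTheory Limits in
/-- the two descriptions of the class `W` coincide. -/
theorem stmt4 {𝒞 : Type u} [Category.{v} 𝒞] [Preadditive 𝒞] [HasBinaryBiproducts 𝒞]
    (S : ExtriangulatedStructure.{w} 𝒞) (hWIC : S.WIC)
    (𝒬 ℛ Qt Rt : Set 𝒞)
    (hcp1 : S.CotorsionPair 𝒬 Rt) (hh1 : S.Hereditary 𝒬 Rt)
    (hcp2 : S.CotorsionPair Qt ℛ) (hh2 : S.Hereditary Qt ℛ)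
    (hRR : Rt ⊆ ℛ) (hQQ : Qt ⊆ 𝒬) (hmeet : Qt ∩ ℛ = 𝒬 ∩ Rt) :
    {X : 𝒞 | ∃ (R Q : 𝒞) (f : X ⟶ R) (g : R ⟶ Q) (δ : S.E Q X),
        S.IsTriangle f g δ ∧ R ∈ Rt ∧ Q ∈ Qt} =
    {X : 𝒞 | ∃ (R Q : 𝒞) (f : R ⟶ Q) (g : Q ⟶ X) (δ : S.E X R),
        S.IsTriangle f g δ ∧ R ∈ Rt ∧ Q ∈ Qt} := by
  ext X
  simp only [Set.mem_setOf_eq]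
  constructor
  · rintro ⟨R₁, Q₁, f, g, δ, ht, hR₁, hQ₁⟩
    obtain ⟨R₂, Q₂, j₂, q₂, θ₂, ht₂, hQ₂𝒬, hR₂⟩ := hcp1.2.1 R₁
    have hQ₂Rt : Q₂ ∈ Rt := S.rt_ext hcp1 hh1 ht₂ hR₂ hR₁
    have hQ₂Qt : Q₂ ∈ Qt := by
      have hmem : Q₂ ∈ 𝒬 ∩ Rt := ⟨hQ₂𝒬, hQ₂Rt⟩
      rw [← hmeet] at hmem
      exact hmem.1
    obtain ⟨E₀, i', p', m, n, δ'', ht1, ht2, -, -, -, -, -⟩ := S.ET4op f g δ j₂ q₂ θ₂ ht ht₂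
    exact ⟨R₂, E₀, m, n, _, ht2, hR₂, hh2.1 i' p' δ'' ht1 hQ₂Qt hQ₁⟩
  · rintro ⟨R₁, Q₁, f, g, δ, ht, hR₁, hQ₁⟩
    obtain ⟨T₁, V₁, u, v, θ₁, htu, hV₁, hT₁ℛ⟩ := hcp2.2.2 Q₁
    have hT₁Qt : T₁ ∈ Qt := S.qt_ext hcp2 hh2 htu hQ₁ hV₁
    have hT₁Rt : T₁ ∈ Rt := by
      have hmem : T₁ ∈ Qt ∩ ℛ := ⟨hT₁Qt, hT₁ℛ⟩
      rw [hmeet] at hmem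
      exact hmem.2
    obtain ⟨E₀, hmap, h', d, e, δ'', ht1, ht2, -, -, -, -, -⟩ := S.ET4 f g δ u v θ₁ ht htu
    exact ⟨E₀, V₁, d, e, _, ht2, hh1.2 hmap h' δ'' ht1 hR₁ hT₁Rt, hV₁⟩
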